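/- For a fleet of n airplanes with tank volumes v_i ≥ 0 and consumption rates c_i > 0, and any dropout sequence σ (a bijection {1,…,n} → A), the quantity Σ_{i=1}^n v_{σ(i)} / (Σ_{j=i}^n c_{σ(j)}) equals Σ_{i∈A} w_i·m_i/M_i for the Block-Stacking instance defined by m_i = c_i, w_i = v_i/c_i, where M_i = Σ_{j: π(j) ≤ π(i)} m_j and π is the reverse of σ^{-1}. Hence the maxima of the two problems over all orderings are equal. -/

import Mathlib

open Finset

lemma airplane_aux (n : ℕ) (v c : Fin n → ℝ) (hc : ∀ i, 0 < c i)
    (σ : Equiv.Perm (Fin n)) :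
    ∑ i, v (σ i) / (∑ j ∈ Finset.Ici i, c (σ j))
      = ∑ i, (v i / c i) * c i
          / (∑ j ∈ Finset.univ.filter (fun j => (σ.symm j).rev ≤ (σ.symm i).rev), c j) := by
  refine Fintype.sum_equiv σ _ _ (fun k => ?_)
  rw [Equiv.symm_apply_apply, div_mul_cancel₀ _ (hc (σ k)).ne']
  congr 1
  refine Finset.sum_equiv σ (fun j => ?_) (fun j _ => rfl)
  simp [Fin.rev_le_rev]

/-- Airplane Refueling is equivalent to Block Stacking without
counterbalancing: under `m_i = c_i`, `w_i = v_i/c_i`, the fleet range of any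
dropout sequence `σ` equals the overhang of the corresponding stacking order
(the reverse of `σ⁻¹`), and hence the optima coincide. -/
theorem airplane_refueling_eq_block_stacking (n : ℕ) (hn : 0 < n)
    (v c : Fin n → ℝ) (hv : ∀ i, 0 ≤ v i) (hc : ∀ i, 0 < c i) :
    (∀ σ : Equiv.Perm (Fin n),
      ∑ i, v (σ i) / (∑ j ∈ Finset.Ici i, c (σ j))
        = ∑ i, (v i / c i) * c i
            / (∑ j ∈ Finset.univ.filter (fun j => (σ.symm j).rev ≤ (σ.symm i).rev), c j)) ∧
    (⨆ σ : Equiv.Perm (Fin n), ∑ i, v (σ i) / (∑ j ∈ Finset.Ici i, c (σ j)))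
      = ⨆ π : Equiv.Perm (Fin n),
          ∑ i, (v i / c i) * c i
            / (∑ j ∈ Finset.univ.filter (fun j => π j ≤ π i), c j) := by
  refine ⟨airplane_aux n v c hc, ?_⟩
  set G : Equiv.Perm (Fin n) → ℝ := fun π =>
    ∑ i, (v i / c i) * c i
      / (∑ j ∈ Finset.univ.filter (fun j => π j ≤ π i), c j) with hG
  have hsurj : Function.Surjective
      (fun σ : Equiv.Perm (Fin n) => σ.symm.trans (Fin.revPerm : Equiv.Perm (Fin n))) := by
    intro π
    exact ⟨(π.trans (Fin.revPerm : Equiv.Perm (Fin n)).symm).symm, by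
      ext j; simp⟩
  have h1 : ∀ σ : Equiv.Perm (Fin n),
      (∑ i, v (σ i) / (∑ j ∈ Finset.Ici i, c (σ j)))
        = G (σ.symm.trans (Fin.revPerm : Equiv.Perm (Fin n))) := by
    intro σ
    rw [airplane_aux n v c hc σ, hG]
    rfl
  calc (⨆ σ : Equiv.Perm (Fin n), ∑ i, v (σ i) / (∑ j ∈ Finset.Ici i, c (σ j)))
      = ⨆ σ : Equiv.Perm (Fin n), G (σ.symm.trans Fin.revPerm) := by
        exact iSup_congr h1
    _ = ⨆ π, G π := hsurj.iSup_comp G
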